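/- Let X be an n×n real matrix with XᵀX = Iₙ (orthonormal), let y ∈ ℝⁿ, and for λ ≥ 0 define L(α) = ‖y − Xα‖₂ + λ‖α‖₂ for α ∈ ℝⁿ. Then the infimum of L over ℝⁿ equals min(λ, 1)·‖y‖₂, and this infimum is attained. -/
import Mathlib

open scoped BigOperators
open Matrix

/-- Euclidean norm of a vector in `ℝᵐ`. -/
noncomputable def norm2 {m : ℕ} (v : Fin m → ℝ) : ℝ := Real.sqrt (∑ i, (v i) ^ 2)

/-- The square-root group-LASSO objective with orthonormal design:
`L(α) = ‖y − Xα‖₂ + λ‖α‖₂`. -/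
noncomputable def sqrtGroupLassoObj {n : ℕ} (X : Matrix (Fin n) (Fin n) ℝ)
    (y : Fin n → ℝ) (lam : ℝ) (α : Fin n → ℝ) : ℝ :=
  norm2 (y - X.mulVec α) + lam * norm2 α

lemma norm2_eq_norm {m : ℕ} (v : Fin m → ℝ) :
    norm2 v = ‖(WithLp.equiv 2 (Fin m → ℝ)).symm v‖ := by
  rw [EuclideanSpace.norm_eq]
  simp [norm2, sq_abs]

lemma norm2_nonneg {m : ℕ} (v : Fin m → ℝ) : 0 ≤ norm2 v := Real.sqrt_nonneg _

lemma norm2_zero {m : ℕ} : norm2 (0 : Fin m → ℝ) = 0 := by simp [norm2]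

lemma norm2_triangle {m : ℕ} (a b : Fin m → ℝ) :
    norm2 (a + b) ≤ norm2 a + norm2 b := by
  simp only [norm2_eq_norm]
  exact norm_add_le _ _

lemma norm2_mulVec {n : ℕ} (X : Matrix (Fin n) (Fin n) ℝ)
    (hX : X.transpose * X = 1) (α : Fin n → ℝ) :
    norm2 (X.mulVec α) = norm2 α := by
  unfold norm2
  congr 1
  have h1 : ∀ v : Fin n → ℝ, ∑ i, (v i)^2 = dotProduct v v := by
    intro v; simp [dotProduct, sq]
  rw [h1, h1, Matrix.dotProduct_mulVec, ← Matrix.mulVec_transpose,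
    Matrix.mulVec_mulVec, hX, Matrix.one_mulVec]

/-- With orthonormal design `XᵀX = Iₙ`, the infimum of
`L(α) = ‖y − Xα‖₂ + λ‖α‖₂` over `ℝⁿ` equals `min(λ,1)·‖y‖₂` and is attained. -/
theorem infimum_of_sqrtGroupLasso {n : ℕ} (X : Matrix (Fin n) (Fin n) ℝ)
    (hX : X.transpose * X = 1) (y : Fin n → ℝ) (lam : ℝ) (hlam : 0 ≤ lam) :
    IsLeast (Set.range (sqrtGroupLassoObj X y lam)) (min lam 1 * norm2 y) := by
  constructor
  · -- attained
    rcases le_total lam 1 with h | h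
    · refine ⟨X.transpose.mulVec y, ?_⟩
      have hXXt : X * X.transpose = 1 := mul_eq_one_comm.mp hX
      have hxy : X.mulVec (X.transpose.mulVec y) = y := by
        rw [Matrix.mulVec_mulVec, hXXt, Matrix.one_mulVec]
      rw [sqrtGroupLassoObj, hxy, sub_self, norm2_zero, zero_add,
        ← norm2_mulVec X hX, hxy, min_eq_left h]
    · refine ⟨0, ?_⟩
      rw [sqrtGroupLassoObj, Matrix.mulVec_zero, sub_zero, norm2_zero,
        mul_zero, add_zero, min_eq_right h, one_mul]
  · -- lower bound
    rintro _ ⟨α, rfl⟩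
    have htri : norm2 y ≤ norm2 (y - X.mulVec α) + norm2 α := by
      have := norm2_triangle (y - X.mulVec α) (X.mulVec α)
      rwa [sub_add_cancel, norm2_mulVec X hX] at this
    calc min lam 1 * norm2 y ≤ min lam 1 * (norm2 (y - X.mulVec α) + norm2 α) :=
          mul_le_mul_of_nonneg_left htri (le_min hlam zero_le_one)
      _ = min lam 1 * norm2 (y - X.mulVec α) + min lam 1 * norm2 α := mul_add _ _ _
      _ ≤ 1 * norm2 (y - X.mulVec α) + lam * norm2 α := by
          exact add_le_add
            (mul_le_mul_of_nonneg_right (min_le_right _ _) (norm2_nonneg _))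
            (mul_le_mul_of_nonneg_right (min_le_left _ _) (norm2_nonneg _))
      _ = sqrtGroupLassoObj X y lam α := by rw [one_mul]; rfl
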